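/- Decomposition lemma for measures on two horizontal lines: A bivariate sequence β of degree 2k has a representing measure supported on {(x,y) : y(y-1) = 0} if and only if β = β̃ + β̂, where β̃ has a representing measure supported on the line y = 0 and β̂ has a representing measure supported on the line y = 1. Moreover, in any such decomposition, β̃_{i,j} = 0 for j ≥ 1 and β̂_{i,j} = β_{i,j} for all j ≥ 1, i + j ≤ 2k; and β̂_{i,0} = β_{i,1} for i ≤ 2k - 1. -/

import Mathlib

open Matrix MeasureTheory

/-- Index set of bivariate monomials x^i y^j of total degree ≤ k. -/
def momIdx (k : ℕ) : Finset (ℕ × ℕ) :=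
  (Finset.range (k+1) ×ˢ Finset.range (k+1)).filter (fun p => p.1 + p.2 ≤ k)

/-- The bivariate moment matrix M_k(β), indexed by monomials of total degree ≤ k. -/
def momMat (k : ℕ) (β : ℕ → ℕ → ℝ) : Matrix (momIdx k) (momIdx k) ℝ :=
  fun p q => β (p.1.1 + q.1.1) (p.1.2 + q.1.2)

/-- β has a representing measure supported in K ⊆ ℝ²: a positive Borel measure μ with
μ(Kᶜ) = 0 whose moments up to degree 2k match β. -/
def RepOn (k : ℕ) (β : ℕ → ℕ → ℝ) (K : Set (ℝ × ℝ)) : Prop :=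
  ∃ μ : Measure (ℝ × ℝ),
    (∀ i j : ℕ, i + j ≤ 2*k → Integrable (fun z : ℝ × ℝ => z.1 ^ i * z.2 ^ j) μ) ∧
    (∀ i j : ℕ, i + j ≤ 2*k → β i j = ∫ z, z.1 ^ i * z.2 ^ j ∂μ) ∧
    μ Kᶜ = 0

lemma ae_mem_of_null_compl {μ : Measure (ℝ × ℝ)} {S : Set (ℝ × ℝ)} (h : μ Sᶜ = 0) :
    ∀ᵐ z ∂μ, z ∈ S := by
  rw [MeasureTheory.ae_iff]
  exact h

/-- Decomposition lemma for measures on the two horizontal lines y = 0 and y = 1, together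
with the uniqueness of all moments of the summands except β̃_{i,0}, β̂_{i,0}. -/
theorem stmt16 (k : ℕ) (β : ℕ → ℕ → ℝ) :
    (RepOn k β {z : ℝ × ℝ | z.2 * (z.2 - 1) = 0} ↔
      ∃ β₁ β₂ : ℕ → ℕ → ℝ,
        (∀ i j : ℕ, i + j ≤ 2*k → β i j = β₁ i j + β₂ i j) ∧
        RepOn k β₁ {z : ℝ × ℝ | z.2 = 0} ∧ RepOn k β₂ {z : ℝ × ℝ | z.2 = 1}) ∧
    (∀ β₁ β₂ : ℕ → ℕ → ℝ,
      (∀ i j : ℕ, i + j ≤ 2*k → β i j = β₁ i j + β₂ i j) →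
      RepOn k β₁ {z : ℝ × ℝ | z.2 = 0} → RepOn k β₂ {z : ℝ × ℝ | z.2 = 1} →
      (∀ i j : ℕ, 1 ≤ j → i + j ≤ 2*k → β₁ i j = 0 ∧ β₂ i j = β i j) ∧
      (∀ i : ℕ, i + 1 ≤ 2*k → β₂ i 0 = β i 1)) := by
  have hS : MeasurableSet {z : ℝ × ℝ | z.2 = 0} :=
    (measurableSet_singleton (0:ℝ)).preimage measurable_snd
  constructor
  · constructor
    · rintro ⟨μ, hint, hmom, hsupp⟩
      refine ⟨fun i j => ∫ z, z.1 ^ i * z.2 ^ j ∂(μ.restrict {z : ℝ × ℝ | z.2 = 0}),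
        fun i j => ∫ z, z.1 ^ i * z.2 ^ j ∂(μ.restrict {z : ℝ × ℝ | z.2 = 0}ᶜ), ?_, ?_, ?_⟩
      · intro i j hij
        rw [hmom i j hij, ← integral_add_compl hS (hint i j hij)]
      · exact ⟨μ.restrict _, fun i j hij => (hint i j hij).restrict,
          fun i j hij => rfl, by
            rw [Measure.restrict_apply hS.compl]
            simp⟩
      · refine ⟨μ.restrict _, fun i j hij => (hint i j hij).restrict,
          fun i j hij => rfl, ?_⟩
        have hT : MeasurableSet {z : ℝ × ℝ | z.2 = 1} :=
          (measurableSet_singleton (1:ℝ)).preimage measurable_snd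
        rw [Measure.restrict_apply hT.compl]
        refine measure_mono_null ?_ hsupp
        intro z hz
        simp only [Set.mem_inter_iff, Set.mem_compl_iff, Set.mem_setOf_eq] at hz ⊢
        obtain ⟨h1, h0⟩ := hz
        exact mul_ne_zero h0 (sub_ne_zero.mpr h1)
    · rintro ⟨β₁, β₂, hadd, ⟨μ₁, hint₁, hmom₁, hsupp₁⟩, ⟨μ₂, hint₂, hmom₂, hsupp₂⟩⟩
      refine ⟨μ₁ + μ₂, fun i j hij => (hint₁ i j hij).add_measure (hint₂ i j hij),
        fun i j hij => ?_, ?_⟩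
      · rw [integral_add_measure (hint₁ i j hij) (hint₂ i j hij),
          hadd i j hij, hmom₁ i j hij, hmom₂ i j hij]
      · simp only [Measure.add_apply]
        have h1 : μ₁ {z : ℝ × ℝ | z.2 * (z.2 - 1) = 0}ᶜ = 0 := by
          refine measure_mono_null ?_ hsupp₁
          intro z hz
          simp only [Set.mem_compl_iff, Set.mem_setOf_eq] at hz ⊢
          intro h; exact hz (by rw [h]; ring)
        have h2 : μ₂ {z : ℝ × ℝ | z.2 * (z.2 - 1) = 0}ᶜ = 0 := by
          refine measure_mono_null ?_ hsupp₂
          intro z hz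
          simp only [Set.mem_compl_iff, Set.mem_setOf_eq] at hz ⊢
          intro h; exact hz (by rw [h]; ring)
        rw [h1, h2, add_zero]
  · rintro β₁ β₂ hadd ⟨μ₁, hint₁, hmom₁, hsupp₁⟩ ⟨μ₂, hint₂, hmom₂, hsupp₂⟩
    have key₁ : ∀ i j : ℕ, 1 ≤ j → i + j ≤ 2*k → β₁ i j = 0 := by
      intro i j hj hij
      rw [hmom₁ i j hij]
      rw [integral_congr_ae (g := fun _ => (0:ℝ))
        ((ae_mem_of_null_compl hsupp₁).mono (fun z hz => by
          simp only [Set.mem_setOf_eq] at hz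
          simp [hz, zero_pow (by omega : j ≠ 0)]))]
      simp
    have key₂ : ∀ i j j' : ℕ, i + j ≤ 2*k → i + j' ≤ 2*k → β₂ i j = β₂ i j' := by
      intro i j j' hij hij'
      rw [hmom₂ i j hij, hmom₂ i j' hij']
      refine integral_congr_ae ((ae_mem_of_null_compl hsupp₂).mono (fun z hz => by
        simp only [Set.mem_setOf_eq] at hz
        simp [hz]))
    refine ⟨fun i j hj hij => ⟨key₁ i j hj hij, ?_⟩, fun i hi => ?_⟩
    · have := hadd i j hij
      rw [key₁ i j hj hij] at this
      linarith
    · have h20 : β₂ i 0 = β₂ i 1 := key₂ i 0 1 (by omega) hi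
      have h1 : β₂ i 1 = β i 1 := by
        have := hadd i 1 hi
        rw [key₁ i 1 le_rfl hi] at this
        linarith
      rw [h20, h1]
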